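/- Let V₁, V₂, V₃ be quadratic homogeneous vector fields on ℝ³ such that dim span{V₁(x), V₂(x), V₃(x)} ≤ 1 for every x ∈ ℝ³. Then at least one of the following holds: (1) there exist a quadratic homogeneous vector field Q on ℝ³ and constants C₁, C₂, C₃ ∈ ℝ such that V_i = C_i·Q for i = 1,2,3; (2) there exist a linear vector field L on ℝ³ and linear functionals ℓ₁, ℓ₂, ℓ₃ ∈ (ℝ³)* such that V_i(x) = ℓ_i(x)·L(x) for all x and i = 1,2,3; (3) there exist a vector v ∈ ℝ³ and quadratic forms Q₁, Q₂, Q₃ : ℝ³ → ℝ such that V_i(x) = Q_i(x)·v for all x and i = 1,2,3. -/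

import Mathlib

open MvPolynomial

namespace ThreeCollinearAux

local notation "R3" => MvPolynomial (Fin 3) ℝ

/-- Ring hom recording homogeneous degree in an auxiliary polynomial variable. -/
noncomputable def degHom : R3 →+* Polynomial R3 :=
  MvPolynomial.eval₂Hom ((Polynomial.C).comp (MvPolynomial.C)) fun i =>
    Polynomial.C (MvPolynomial.X i) * Polynomial.X

lemma degHom_monomial (d : Fin 3 →₀ ℕ) (c : ℝ) :
    degHom (monomial d c) = Polynomial.C (monomial d c) * Polynomial.X ^ d.degree := by
  classical
  rw [degHom, eval₂Hom_monomial]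
  have h1 : (d.prod fun i e => (Polynomial.C (MvPolynomial.X i : R3) * Polynomial.X) ^ e)
      = Polynomial.C (d.prod fun i e => (MvPolynomial.X i : R3) ^ e) * Polynomial.X ^ d.degree := by
    rw [Finsupp.prod]
    have : ∀ i ∈ d.support,
        (Polynomial.C (MvPolynomial.X i : R3) * Polynomial.X) ^ d i
          = Polynomial.C ((MvPolynomial.X i : R3) ^ d i) * Polynomial.X ^ d i := by
      intro i _; rw [mul_pow, ← map_pow]
    rw [Finset.prod_congr rfl this, Finset.prod_mul_distrib, ← map_prod,
      Finset.prod_pow_eq_pow_sum]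
    rfl
  rw [h1, RingHom.comp_apply, ← mul_assoc, ← map_mul, ← monomial_eq]

lemma degHom_coeff (p : R3) (k : ℕ) :
    (degHom p).coeff k = homogeneousComponent k p := by
  classical
  induction p using MvPolynomial.induction_on' with
  | add p q hp hq => rw [map_add, Polynomial.coeff_add, hp, hq, map_add]
  | monomial d c =>
    rw [degHom_monomial, homogeneousComponent_of_mem
      ((mem_homogeneousSubmodule _ _).mpr (isHomogeneous_monomial c rfl)),
      Polynomial.coeff_C_mul, Polynomial.coeff_X_pow]
    split_ifs <;> simp_all

lemma eval_one_degHom (p : R3) : Polynomial.eval 1 (degHom p) = p := by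
  have h : (Polynomial.evalRingHom (1 : R3)).comp degHom = RingHom.id R3 := by
    apply MvPolynomial.ringHom_ext
    · intro r; simp [degHom]
    · intro i; simp [degHom]
  exact RingHom.congr_fun h p

lemma degHom_of_isHomogeneous {p : R3} {n : ℕ} (h : p.IsHomogeneous n) :
    degHom p = Polynomial.C p * Polynomial.X ^ n := by
  ext k
  rw [degHom_coeff, Polynomial.coeff_C_mul, Polynomial.coeff_X_pow,
    homogeneousComponent_of_mem ((mem_homogeneousSubmodule _ _).mpr h)]
  split_ifs <;> simp_all

/-- A factor of a nonzero homogeneous polynomial is homogeneous. -/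
lemma factor_homog {p q : R3} (hp : p ≠ 0) (hq : q ≠ 0) {n : ℕ}
    (h : (p * q).IsHomogeneous n) :
    ∃ a b : ℕ, a + b = n ∧ p.IsHomogeneous a ∧ q.IsHomogeneous b := by
  have hpq : p * q ≠ 0 := mul_ne_zero hp hq
  have hPQ : degHom p * degHom q = Polynomial.C (p * q) * Polynomial.X ^ n := by
    rw [← map_mul, degHom_of_isHomogeneous h]
  have hp' : degHom p ≠ 0 := fun h0 => hp (by rw [← eval_one_degHom p, h0, Polynomial.eval_zero])
  have hq' : degHom q ≠ 0 := fun h0 => hq (by rw [← eval_one_degHom q, h0, Polynomial.eval_zero])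
  set a := (degHom p).natDegree with ha
  set b := (degHom q).natDegree with hb
  have hmon : (Polynomial.C (p * q) * Polynomial.X ^ n : Polynomial R3)
      = Polynomial.monomial n (p * q) := Polynomial.C_mul_X_pow_eq_monomial
  have hab : a + b = n := by
    rw [ha, hb, ← Polynomial.natDegree_mul hp' hq', hPQ, hmon,
      Polynomial.natDegree_monomial, if_neg hpq]
  have htr : (degHom p).natTrailingDegree + (degHom q).natTrailingDegree = n := by
    rw [← Polynomial.natTrailingDegree_mul hp' hq', hPQ, hmon,
      Polynomial.natTrailingDegree_monomial hpq]
  have tp_le : (degHom p).natTrailingDegree ≤ a := Polynomial.natTrailingDegree_le_natDegree _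
  have tq_le : (degHom q).natTrailingDegree ≤ b := Polynomial.natTrailingDegree_le_natDegree _
  have htp : (degHom p).natTrailingDegree = a := by omega
  have htq : (degHom q).natTrailingDegree = b := by omega
  have hhp : ∀ k, k ≠ a → (degHom p).coeff k = 0 := by
    intro k hk
    by_contra h0
    have h1 := Polynomial.le_natDegree_of_ne_zero h0
    have h2 := Polynomial.natTrailingDegree_le_of_ne_zero h0
    omega
  have hhq : ∀ k, k ≠ b → (degHom q).coeff k = 0 := by
    intro k hk
    by_contra h0
    have h1 := Polynomial.le_natDegree_of_ne_zero h0
    have h2 := Polynomial.natTrailingDegree_le_of_ne_zero h0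
    omega
  have hpform : degHom p = Polynomial.C ((degHom p).coeff a) * Polynomial.X ^ a := by
    ext k
    rw [Polynomial.coeff_C_mul, Polynomial.coeff_X_pow]
    by_cases hk : k = a
    · subst hk; rw [if_pos rfl, mul_one]
    · rw [if_neg hk, mul_zero, hhp k hk]
  have hqform : degHom q = Polynomial.C ((degHom q).coeff b) * Polynomial.X ^ b := by
    ext k
    rw [Polynomial.coeff_C_mul, Polynomial.coeff_X_pow]
    by_cases hk : k = b
    · subst hk; rw [if_pos rfl, mul_one]
    · rw [if_neg hk, mul_zero, hhq k hk]
  have hpc : p = homogeneousComponent a p := by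
    conv_lhs => rw [← eval_one_degHom p, hpform]
    rw [Polynomial.eval_mul, Polynomial.eval_C, Polynomial.eval_pow, Polynomial.eval_X,
      one_pow, mul_one, degHom_coeff]
  have hqc : q = homogeneousComponent b q := by
    conv_lhs => rw [← eval_one_degHom q, hqform]
    rw [Polynomial.eval_mul, Polynomial.eval_C, Polynomial.eval_pow, Polynomial.eval_X,
      one_pow, mul_one, degHom_coeff]
  exact ⟨a, b, hab, hpc ▸ homogeneousComponent_isHomogeneous a p,
    hqc ▸ homogeneousComponent_isHomogeneous b q⟩

end ThreeCollinearAux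


open MvPolynomial

namespace ThreeCollinearAux2

local notation "R3" => MvPolynomial (Fin 3) ℝ

lemma eq_C_of_homog0 {p : R3} (h : p.IsHomogeneous 0) : p = C (coeff 0 p) := by
  apply MvPolynomial.ext
  intro d
  by_cases hd : d = 0
  · subst hd; rw [coeff_C, if_pos rfl]
  · rw [h.coeff_eq_zero (by rwa [Ne, Finsupp.degree_eq_zero_iff]), coeff_C,
      if_neg (fun hh => hd hh.symm)]

lemma degree_single_one (k : Fin 3) : (Finsupp.single k 1 : Fin 3 →₀ ℕ).degree = 1 := by
  rw [Finsupp.degree_apply, Finsupp.support_single_ne_zero k one_ne_zero, Finset.sum_singleton,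
    Finsupp.single_eq_same]

lemma homog1_eval {p : R3} (h : p.IsHomogeneous 1) (x : Fin 3 → ℝ) :
    eval x p = ∑ k : Fin 3, coeff (Finsupp.single k 1) p * x k := by
  have hrep : p = ∑ k : Fin 3, C (coeff (Finsupp.single k 1) p) * X k := by
    apply MvPolynomial.ext
    intro d
    rw [coeff_sum]
    simp only [coeff_C_mul, coeff_X']
    by_cases hd : d.degree = 1
    · have hsum : d 0 + d 1 + d 2 = 1 := by
        have h2 : d.degree = ∑ i : Fin 3, d i :=
          Finset.sum_subset (Finset.subset_univ d.support)
            (fun i _ hi => Finsupp.notMem_support_iff.mp hi)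
        rw [h2, Fin.sum_univ_three] at hd
        exact hd
      obtain ⟨k0, rfl⟩ : ∃ k0 : Fin 3, d = Finsupp.single k0 1 := by
        obtain h0 | h1 | h2 : (d 0 = 1 ∧ d 1 = 0 ∧ d 2 = 0) ∨ (d 0 = 0 ∧ d 1 = 1 ∧ d 2 = 0) ∨
            (d 0 = 0 ∧ d 1 = 0 ∧ d 2 = 1) := by omega
        · exact ⟨0, Finsupp.ext fun i => by
            fin_cases i <;> simp [Finsupp.single_apply, h0.1, h0.2.1, h0.2.2]⟩
        · exact ⟨1, Finsupp.ext fun i => by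
            fin_cases i <;> simp [Finsupp.single_apply, h1.1, h1.2.1, h1.2.2]⟩
        · exact ⟨2, Finsupp.ext fun i => by
            fin_cases i <;> simp [Finsupp.single_apply, h2.1, h2.2.1, h2.2.2]⟩
      rw [Finset.sum_eq_single k0]
      · rw [if_pos rfl, mul_one]
      · intro k _ hk
        rw [if_neg (fun hEq => hk (Finsupp.single_left_injective one_ne_zero hEq)), mul_zero]
      · intro hk; exact absurd (Finset.mem_univ k0) hk
    · rw [h.coeff_eq_zero hd]
      symm
      apply Finset.sum_eq_zero
      intro k _
      rw [if_neg (fun hEq => hd (by rw [← hEq, degree_single_one])), mul_zero]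
  conv_lhs => rw [hrep]
  rw [map_sum]
  refine Finset.sum_congr rfl fun k _ => ?_
  rw [eval_mul, eval_C, eval_X]

lemma dvd_mul_gcd {α : Type*} [CommMonoidWithZero α] [IsCancelMulZero α] [NormalizedGCDMonoid α]
    {x a b c : α} (h1 : x ∣ a * b) (h2 : x ∣ a * c) : x ∣ a * gcd b c := by
  have h := dvd_gcd h1 h2
  exact h.trans (gcd_mul_left' a b c).dvd

end ThreeCollinearAux2


section
open MvPolynomial
open ThreeCollinearAux ThreeCollinearAux2

/-- **Lemma (three pointwise collinear quadratic fields).**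
Let `V₁, V₂, V₃` be quadratic homogeneous vector fields on `ℝ³` (components given by
homogeneous quadratic polynomials) such that `dim span{V₁(x), V₂(x), V₃(x)} ≤ 1` for all
`x ∈ ℝ³`.  Then at least one of the following holds:
(1) `Vᵢ = Cᵢ • Q` for a quadratic vector field `Q` and constants `Cᵢ ∈ ℝ`;
(2) `Vᵢ(x) = ℓᵢ(x) • L(x)` for a linear vector field `L` and linear functionals `ℓᵢ`;
(3) `Vᵢ(x) = Qᵢ(x) • v` for a fixed vector `v` and quadratic forms `Qᵢ`. -/
theorem three_collinear_quadratic_fields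
    (V : Fin 3 → (Fin 3 → ℝ) → (Fin 3 → ℝ))
    (P : Fin 3 → Fin 3 → MvPolynomial (Fin 3) ℝ)
    (hP : ∀ i j, (P i j).IsHomogeneous 2)
    (hVP : ∀ (i : Fin 3) (x : Fin 3 → ℝ) (j : Fin 3),
      V i x j = MvPolynomial.eval x (P i j))
    (hcol : ∀ x : Fin 3 → ℝ,
      Module.finrank ℝ (Submodule.span ℝ (Set.range fun i => V i x)) ≤ 1) :
    (∃ (Q : (Fin 3 → ℝ) → (Fin 3 → ℝ)) (PQ : Fin 3 → MvPolynomial (Fin 3) ℝ),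
      (∀ j, (PQ j).IsHomogeneous 2) ∧
      (∀ (x : Fin 3 → ℝ) (j : Fin 3), Q x j = MvPolynomial.eval x (PQ j)) ∧
      ∃ C : Fin 3 → ℝ, ∀ (i : Fin 3) (x : Fin 3 → ℝ), V i x = C i • Q x) ∨
    (∃ (L : (Fin 3 → ℝ) →ₗ[ℝ] (Fin 3 → ℝ)) (ℓ : Fin 3 → ((Fin 3 → ℝ) →ₗ[ℝ] ℝ)),
      ∀ (i : Fin 3) (x : Fin 3 → ℝ), V i x = ℓ i x • L x) ∨
    (∃ (v : Fin 3 → ℝ) (Q : Fin 3 → MvPolynomial (Fin 3) ℝ),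
      (∀ i, (Q i).IsHomogeneous 2) ∧
      ∀ (i : Fin 3) (x : Fin 3 → ℝ), V i x = MvPolynomial.eval x (Q i) • v) := by
  classical
  -- Step 1: pointwise 2×2 minors vanish
  have hmin : ∀ (x : Fin 3 → ℝ) (i k j l : Fin 3),
      V i x j * V k x l = V i x l * V k x j := by
    intro x i k j l
    by_contra hne
    have hne' : V i x j * V k x l - V i x l * V k x j ≠ 0 := sub_ne_zero_of_ne hne
    have hind : LinearIndependent ℝ ![V i x, V k x] := by
      rw [LinearIndependent.pair_iff]
      intro s t hst
      have hj := congrFun hst j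
      have hl := congrFun hst l
      simp only [Pi.add_apply, Pi.smul_apply, smul_eq_mul, Pi.zero_apply] at hj hl
      have hs : s * (V i x j * V k x l - V i x l * V k x j) = 0 := by
        linear_combination V k x l * hj - V k x j * hl
      have ht : t * (V i x j * V k x l - V i x l * V k x j) = 0 := by
        linear_combination V i x j * hl - V i x l * hj
      exact ⟨(mul_eq_zero.mp hs).resolve_right hne',
             (mul_eq_zero.mp ht).resolve_right hne'⟩
    have h2 : Module.finrank ℝ (Submodule.span ℝ (Set.range ![V i x, V k x])) = 2 := by
      rw [finrank_span_eq_card hind]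
      simp
    have hle : Submodule.span ℝ (Set.range ![V i x, V k x])
        ≤ Submodule.span ℝ (Set.range fun i' => V i' x) := by
      apply Submodule.span_mono
      rintro y ⟨m, rfl⟩
      fin_cases m
      · exact ⟨i, rfl⟩
      · exact ⟨k, rfl⟩
    have hmono := Submodule.finrank_mono hle
    have := hcol x
    omega
  -- Step 2: polynomial minors vanish
  have hPmin : ∀ i k j l, P i j * P k l = P i l * P k j := by
    intro i k j l
    apply MvPolynomial.funext
    intro x
    rw [map_mul, map_mul, ← hVP, ← hVP, ← hVP, ← hVP]
    exact hmin x i k j l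
  by_cases hall : ∀ i j, P i j = 0
  · left
    refine ⟨fun _ => 0, fun _ => 0, fun _ => isHomogeneous_zero _ _ _,
      fun x j => by simp, fun _ => 0, fun i x => ?_⟩
    funext j
    rw [hVP i x j, hall i j]
    simp
  · push_neg at hall
    obtain ⟨i0, j0, hA⟩ := hall
    letI : StrongNormalizationMonoid (MvPolynomial (Fin 3) ℝ) :=
      UniqueFactorizationMonoid.normalizationMonoid
    letI : NormalizedGCDMonoid (MvPolynomial (Fin 3) ℝ) :=
      UniqueFactorizationMonoid.toNormalizedGCDMonoid _
    set d := gcd (P i0 0) (gcd (P i0 1) (P i0 2)) with hd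
    have hdvd : ∀ j, d ∣ P i0 j := by
      intro j
      fin_cases j
      · exact gcd_dvd_left _ _
      · exact (gcd_dvd_right _ _).trans (gcd_dvd_left _ _)
      · exact (gcd_dvd_right _ _).trans (gcd_dvd_right _ _)
    choose g hg using hdvd
    have hd0 : d ≠ 0 := fun h => hA (by rw [hg j0, h, zero_mul])
    have hgj0 : g j0 ≠ 0 := fun h => hA (by rw [hg j0, h, mul_zero])
    have he1 : gcd (g 0) (gcd (g 1) (g 2)) ∣ 1 := by
      have h0 : d * gcd (g 0) (gcd (g 1) (g 2)) ∣ P i0 0 := by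
        rw [hg 0]; exact mul_dvd_mul_left d (gcd_dvd_left _ _)
      have h1 : d * gcd (g 0) (gcd (g 1) (g 2)) ∣ P i0 1 := by
        rw [hg 1]; exact mul_dvd_mul_left d ((gcd_dvd_right _ _).trans (gcd_dvd_left _ _))
      have h2 : d * gcd (g 0) (gcd (g 1) (g 2)) ∣ P i0 2 := by
        rw [hg 2]; exact mul_dvd_mul_left d ((gcd_dvd_right _ _).trans (gcd_dvd_right _ _))
      have hde : d * gcd (g 0) (gcd (g 1) (g 2)) ∣ d := by
        conv_rhs => rw [hd]
        exact dvd_gcd h0 (dvd_gcd h1 h2)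
      have : d * gcd (g 0) (gcd (g 1) (g 2)) ∣ d * 1 := by rwa [mul_one]
      exact (mul_dvd_mul_iff_left hd0).mp this
    have hrow : ∀ i j, P i j * g j0 = P i j0 * g j := by
      intro i j
      have hm := hPmin i i0 j j0
      rw [hg j0, hg j] at hm
      have h2 : d * (P i j * g j0) = d * (P i j0 * g j) := by linear_combination hm
      exact mul_left_cancel₀ hd0 h2
    have hdvdt : ∀ i, g j0 ∣ P i j0 := by
      intro i
      have hj : ∀ j, g j0 ∣ P i j0 * g j := fun j => ⟨P i j, by rw [← hrow i j]; ring⟩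
      have key : g j0 ∣ P i j0 * gcd (g 0) (gcd (g 1) (g 2)) :=
        dvd_mul_gcd (hj 0) (dvd_mul_gcd (hj 1) (hj 2))
      have := key.trans (mul_dvd_mul_left (P i j0) he1)
      rwa [mul_one] at this
    choose t ht using hdvdt
    have hfac : ∀ i j, P i j = t i * g j := by
      intro i j
      apply mul_right_cancel₀ hgj0
      rw [hrow i j, ht i]
      ring
    have ht0 : t i0 ≠ 0 := fun h => hA (by rw [hfac i0 j0, h, zero_mul])
    obtain ⟨m, e, hme, htm, hge⟩ :=
      factor_homog ht0 hgj0 (by rw [← hfac i0 j0]; exact hP i0 j0)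
    have hgall : ∀ j, (g j).IsHomogeneous e := by
      intro j
      by_cases h0 : g j = 0
      · rw [h0]; exact isHomogeneous_zero _ _ _
      obtain ⟨a, b, hab, hta, hgb⟩ :=
        factor_homog ht0 h0 (by rw [← hfac i0 j]; exact hP i0 j)
      have ham : a = m := hta.inj_right htm ht0
      have hbe : b = e := by omega
      rwa [hbe] at hgb
    have htall : ∀ i, (t i).IsHomogeneous m := by
      intro i
      by_cases h0 : t i = 0
      · rw [h0]; exact isHomogeneous_zero _ _ _
      obtain ⟨a, b, hab, hta, hgb⟩ :=
        factor_homog h0 hgj0 (by rw [← hfac i j0]; exact hP i j0)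
      have hbe : b = e := hgb.inj_right hge hgj0
      have ham : a = m := by omega
      rwa [ham] at hta
    have hm2 : m ≤ 2 := by omega
    interval_cases m
    · -- m = 0, e = 2 : common quadratic field
      left
      have he2 : e = 2 := by omega
      subst he2
      refine ⟨fun x j => MvPolynomial.eval x (g j), g, hgall, fun x j => rfl,
        fun i => coeff 0 (t i), fun i x => ?_⟩
      funext j
      rw [hVP i x j, hfac i j, map_mul]
      conv_lhs => rw [eq_C_of_homog0 (htall i)]
      simp [mul_comm]
    · -- m = 1, e = 1 : linear case
      right; left
      have he2 : e = 1 := by omega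
      subst he2
      refine ⟨LinearMap.pi (fun j => ∑ k : Fin 3,
          coeff (Finsupp.single k 1) (g j) • LinearMap.proj k),
        fun i => ∑ k : Fin 3, coeff (Finsupp.single k 1) (t i) • LinearMap.proj k,
        fun i x => ?_⟩
      funext j
      rw [hVP i x j, hfac i j, map_mul, homog1_eval (htall i) x, homog1_eval (hgall j) x]
      simp [LinearMap.pi_apply, LinearMap.sum_apply, LinearMap.smul_apply,
        LinearMap.proj_apply, smul_eq_mul]
    · -- m = 2, e = 0 : fixed direction
      right; right
      have he2 : e = 0 := by omega
      subst he2
      refine ⟨fun j => coeff 0 (g j), t, htall, fun i x => ?_⟩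
      funext j
      rw [hVP i x j, hfac i j, map_mul]
      conv_lhs => rw [eq_C_of_homog0 (hgall j)]
      simp

end
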